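/- Let q be an odd prime power and let n divide (q-1)/2 with n ≥ 3. If n is even, then the number of negacyclic LCD codes C over F_q of length n with {0} ≠ C ≠ F_q^n equals 2(2^{(n-2)/2} - 1); if n is odd, this number equals 2(2^{(n-1)/2} - 1). -/

import Mathlib

open Finset

/-- The negacyclic shift of a word: `(c_0, ..., c_{n-1}) ↦ (-c_{n-1}, c_0, ..., c_{n-2})`. -/
def negashift {F : Type*} [Neg F] {n : ℕ} (c : Fin n → F) : Fin n → F :=
  fun i =>
    if _h : (i : ℕ) = 0 then -c ⟨n - 1, Nat.sub_lt i.pos Nat.one_pos⟩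
    else c ⟨(i : ℕ) - 1, lt_of_le_of_lt (Nat.sub_le _ _) i.isLt⟩

/-- A linear code `C ≤ F^n` is negacyclic if it is closed under the negacyclic shift. -/
def IsNegacyclic {F : Type*} [Field F] {n : ℕ} (C : Submodule F (Fin n → F)) : Prop :=
  ∀ c ∈ C, negashift c ∈ C

/-- `C` is an LCD code: `C ∩ C^⊥ = {0}` for the Euclidean inner product. -/
def IsLCD {F : Type*} [Field F] {n : ℕ} (C : Submodule F (Fin n → F)) : Prop :=
  ∀ x ∈ C, (∀ y ∈ C, ∑ i, x i * y i = 0) → x = 0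

/-- `C` is a Hermitian LCD code: `C ∩ C^{⊥H} = {0}` for the Hermitian inner product
`⟨x, y⟩ = ∑ x_i y_i^q`. -/
def IsHermLCD (q : ℕ) {F : Type*} [Field F] {n : ℕ} (C : Submodule F (Fin n → F)) : Prop :=
  ∀ x ∈ C, (∀ y ∈ C, ∑ i, x i * (y i) ^ q = 0) → x = 0

open scoped Classical in
/-- The Hamming weight of a word. -/
noncomputable def wt {F : Type*} [Zero F] {n : ℕ} (c : Fin n → F) : ℕ :=
  (Finset.univ.filter fun i => c i ≠ 0).card

/-- The minimum distance of the code `C` is exactly `d`: `d` is the least Hamming weight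
of a nonzero codeword. -/
def HasMinDist {F : Type*} [Zero F] {n : ℕ} (C : Set (Fin n → F)) (d : ℕ) : Prop :=
  IsLeast {w : ℕ | ∃ c ∈ C, c ≠ 0 ∧ wt c = w} d

def negashiftLM (F : Type*) [Field F] (n : ℕ) : Module.End F (Fin n → F) where
  toFun := negashift
  map_add' x y := by
    funext i
    simp only [negashift, Pi.add_apply]
    split <;> ring
  map_smul' c x := by
    funext i
    simp only [negashift, Pi.smul_apply, smul_eq_mul, RingHom.id_apply]
    split <;> ring

lemma eig_comp_mem {F V : Type*} [Field F] [AddCommGroup V] [Module F V]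
    (f : Module.End F V) {ι : Type*} [DecidableEq ι]
    (lam : ι → F) (hinj : Function.Injective lam) (v : ι → V)
    (hv : ∀ j, f (v j) = lam j • v j)
    (C : Submodule F V) (hC : ∀ c ∈ C, f c ∈ C) (j : ι) :
    ∀ (s : Finset ι) (d : ι → F), (∑ m ∈ s, d m • v m) ∈ C → j ∈ s → d j • v j ∈ C := by
  intro s
  induction s using Finset.strongInduction with
  | _ s ih =>
    intro d hmem hj
    by_cases hs : s.erase j = ∅
    · have hsj : s = {j} := by
        apply Finset.ext
        intro x
        simp only [Finset.mem_singleton]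
        constructor
        · intro hx
          by_contra hxj
          exact Finset.notMem_empty x (hs ▸ Finset.mem_erase.2 ⟨hxj, hx⟩)
        · rintro rfl; exact hj
      rw [hsj, Finset.sum_singleton] at hmem
      exact hmem
    · obtain ⟨a, ha⟩ := Finset.nonempty_of_ne_empty hs
      have haj : a ≠ j := (Finset.mem_erase.1 ha).1
      have has : a ∈ s := (Finset.mem_erase.1 ha).2
      set d' : ι → F := fun m => d m * (lam m - lam a) with hd'
      have h1 : (∑ m ∈ s, d' m • v m)
          = f (∑ m ∈ s, d m • v m) - lam a • (∑ m ∈ s, d m • v m) := by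
        rw [map_sum, Finset.smul_sum, ← Finset.sum_sub_distrib]
        apply Finset.sum_congr rfl
        intro m _
        rw [map_smul, hv m, smul_smul, smul_smul, ← sub_smul]
        congr 1; simp only [hd']; ring
      have hstep : (∑ m ∈ s, d' m • v m) ∈ C :=
        h1 ▸ C.sub_mem (hC _ hmem) (C.smul_mem _ hmem)
      have h2 : (∑ m ∈ s.erase a, d' m • v m) ∈ C := by
        rw [← Finset.sum_erase_add s _ has] at hstep
        have : d' a • v a = 0 := by simp [hd']
        rwa [this, add_zero] at hstep
      have hrec := ih (s.erase a) (Finset.erase_ssubset has) d' h2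
        (Finset.mem_erase.2 ⟨fun h => haj h.symm, hj⟩)
      have hne : lam j - lam a ≠ 0 := sub_ne_zero.2 fun h => haj (hinj h.symm)
      have := C.smul_mem (lam j - lam a)⁻¹ hrec
      rwa [hd', smul_smul, show (lam j - lam a)⁻¹ * (d j * (lam j - lam a)) = d j by
        field_simp] at this

lemma fin_geom_sum_zero {F : Type*} [Field F] {n : ℕ} {β : F} (hβ : β ≠ 1) (h : β ^ n = 1) :
    ∑ i : Fin n, β ^ (i : ℕ) = 0 := by
  rw [Fin.sum_univ_eq_sum_range (fun i => β ^ i), geom_sum_eq hβ, h, sub_self, zero_div]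

theorem stmt_5 (q : ℕ) (hq : IsPrimePow q) (hqodd : Odd q)
    (F : Type) [Field F] [Fintype F] (hF : Fintype.card F = q)
    (n : ℕ) (hn : 3 ≤ n) (hdvd : n ∣ (q - 1) / 2) :
    (Even n →
      Nat.card {C : Submodule F (Fin n → F) //
          IsNegacyclic C ∧ IsLCD C ∧ C ≠ ⊥ ∧ C ≠ ⊤} =
        2 * (2 ^ ((n - 2) / 2) - 1)) ∧
    (Odd n →
      Nat.card {C : Submodule F (Fin n → F) //
          IsNegacyclic C ∧ IsLCD C ∧ C ≠ ⊥ ∧ C ≠ ⊤} =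
        2 * (2 ^ ((n - 1) / 2) - 1)) := by
  classical
  obtain ⟨p, k, hpp, hkpos, hpk⟩ := hq
  have hp2 : 2 ≤ p := (Nat.prime_iff.mpr hpp).two_le
  have hq2 : 2 ≤ q := by
    calc 2 ≤ p := hp2
    _ ≤ p ^ k := Nat.le_self_pow (by omega) p
    _ = q := hpk
  obtain ⟨mq, hmq⟩ := hqodd
  obtain ⟨c, hc⟩ := hdvd
  have h2n : q - 1 = 2 * n * c := by rw [mul_assoc]; omega
  -- generator of order 2n
  have hcardu : Fintype.card Fˣ = q - 1 := by rw [Fintype.card_units, hF]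
  obtain ⟨g0, hg0⟩ := IsCyclic.exists_ofOrder_eq_natCard (α := Fˣ)
  have hg0' : orderOf g0 = q - 1 := by rwa [Nat.card_eq_fintype_card, hcardu] at hg0
  have h2npos : 0 < 2 * n := by omega
  have h2ndvd : 2 * n ∣ q - 1 := ⟨c, h2n⟩
  set ζ : Fˣ := g0 ^ ((q - 1) / (2 * n)) with hζ
  have hζord : orderOf ζ = 2 * n := by
    rw [hζ, ← hg0', orderOf_pow_orderOf_div (by rw [hg0']; omega) (hg0' ▸ h2ndvd)]
  set g : F := (ζ : F) with hg
  have hgord : orderOf g = 2 * n := by rw [hg, orderOf_units, hζord]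
  have hgpow : ∀ m : ℕ, g ^ m = 1 ↔ 2 * n ∣ m := fun m => by
    rw [← hgord]; exact orderOf_dvd_iff_pow_eq_one.symm
  have hgne : g ≠ 0 := ζ.ne_zero
  have hgn : g ^ n = -1 := by
    have hg2n : g ^ (2 * n) = 1 := (hgpow _).2 dvd_rfl
    have h2 : g ^ n * g ^ n = 1 := by rw [← pow_add, show n + n = 2 * n by ring, hg2n]
    have h1 : (g ^ n - 1) * (g ^ n + 1) = 0 := by linear_combination h2
    have hne1 : g ^ n ≠ 1 := by
      intro h
      have := Nat.le_of_dvd (by omega) ((hgpow n).1 h)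
      omega
    rcases mul_eq_zero.1 h1 with h | h
    · exact absurd (by linear_combination h) hne1
    · linear_combination h
  -- (n : F) ≠ 0
  have hqF : ((q : ℕ) : F) = 0 := by rw [← hF]; exact FiniteField.cast_card_eq_zero F
  have hnF : (n : F) ≠ 0 := by
    intro h
    have h1 : ((q - 1 : ℕ) : F) = 0 := by
      rw [h2n]; push_cast; rw [h]; ring
    have h2 : ((q : ℕ) : F) = ((q - 1 : ℕ) : F) + 1 := by
      rw [show q = (q - 1) + 1 by omega]; push_cast; ring
    rw [hqF, h1] at h2
    simp at h2
  haveI : Nonempty (Fin n) := ⟨⟨0, by omega⟩⟩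
  -- roots
  set r : Fin n → F := fun j => g ^ (2 * (j : ℕ) + 1) with hr
  have hrn : ∀ j, r j ^ n = -1 := by
    intro j
    rw [hr]
    rw [← pow_mul, mul_comm (2 * (j : ℕ) + 1) n, pow_mul, hgn]
    exact Odd.neg_one_pow ⟨(j : ℕ), by ring⟩
  have hrne : ∀ j, r j ≠ 0 := fun j => pow_ne_zero _ hgne
  have hgeq : ∀ a b : ℕ, a ≤ b → (g ^ a = g ^ b ↔ 2 * n ∣ b - a) := by
    intro a b hab
    constructor
    · intro h
      have : g ^ a * g ^ (b - a) = g ^ a * 1 := by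
        rw [mul_one, ← pow_add, show a + (b - a) = b by omega, h]
      exact (hgpow _).1 (mul_left_cancel₀ (pow_ne_zero _ hgne) this)
    · intro h
      have h1 : g ^ (b - a) = 1 := (hgpow _).2 h
      have : g ^ b = g ^ a * g ^ (b - a) := by rw [← pow_add]; congr 1; omega
      rw [this, h1, mul_one]
  have hrinj : Function.Injective r := by
    intro a b hab
    rcases le_total (a : ℕ) (b : ℕ) with h | h
    · have hb := b.isLt; have ha2 := a.isLt
      rcases Nat.eq_zero_or_pos ((2 * (b:ℕ) + 1) - (2 * (a:ℕ) + 1)) with h0 | h0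
      · exact Fin.ext (by omega)
      · have := Nat.le_of_dvd h0 ((hgeq _ _ (by omega)).1 hab); exact absurd this (by omega)
    · have hb := b.isLt; have ha2 := a.isLt
      rcases Nat.eq_zero_or_pos ((2 * (a:ℕ) + 1) - (2 * (b:ℕ) + 1)) with h0 | h0
      · exact Fin.ext (by omega)
      · have := Nat.le_of_dvd h0 ((hgeq _ _ (by omega)).1 hab.symm); exact absurd this (by omega)
  -- eigenvectors
  set e : Fin n → (Fin n → F) := fun j i => r j ^ (i : ℕ) with he
  set lam : Fin n → F := fun j => (r j)⁻¹ with hlam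
  have hlaminj : Function.Injective lam := fun a b h => hrinj (inv_injective h)
  have heig : ∀ j, negashiftLM F n (e j) = lam j • e j := by
    intro j
    funext i
    show negashift (e j) i = _
    simp only [negashift, Pi.smul_apply, smul_eq_mul, he, hlam]
    split
    · next h0 =>
      rw [h0]
      have h1 : (r j) ^ (n - 1) * r j = r j ^ n := by
        rw [← pow_succ]; congr 1; omega
      have h2 : (-(r j ^ (n - 1))) * r j = 1 := by
        rw [neg_mul, h1, hrn j]; ring
      rw [pow_zero, mul_one]
      exact eq_inv_of_mul_eq_one_left h2
    · next h0 =>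
      have h1 : r j ^ ((i : ℕ) - 1) * r j = r j ^ (i : ℕ) := by
        rw [← pow_succ]; congr 1; omega
      rw [← h1, mul_comm (r j ^ ((i : ℕ) - 1)) (r j), ← mul_assoc,
        inv_mul_cancel₀ (hrne j), one_mul]
  have hez : ∀ j, e j ≠ 0 := by
    intro j h
    have := congrFun h ⟨0, by omega⟩
    simp [he] at this
  have hli : LinearIndependent F e :=
    (negashiftLM F n).eigenvectors_linearIndependent' lam hlaminj e
      (fun j => ⟨Module.End.mem_eigenspace_iff.2 (heig j), hez j⟩)
  have hcard : Fintype.card (Fin n) = Module.finrank F (Fin n → F) := by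
    simp [Module.finrank_fin_fun]
  set b : Module.Basis (Fin n) F (Fin n → F) := basisOfLinearIndependentOfCardEqFinrank hli hcard with hbdef
  have hb : ⇑b = e := coe_basisOfLinearIndependentOfCardEqFinrank hli hcard
  -- the code associated to a set of indices
  set Code : Finset (Fin n) → Submodule F (Fin n → F) :=
    fun T => Submodule.span F (e '' T) with hCode
  have hmemCode : ∀ (T : Finset (Fin n)) (j : Fin n), e j ∈ Code T ↔ j ∈ T := by
    intro T j
    constructor
    · intro h
      by_contra hj
      exact hli.notMem_span_image (by simpa using hj) h
    · intro h
      exact Submodule.subset_span ⟨j, by simpa using h, rfl⟩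
  have hCodeInj : Function.Injective Code := by
    intro T1 T2 h
    ext j
    rw [← hmemCode T1 j, ← hmemCode T2 j, h]
  have hrep : ∀ (T : Finset (Fin n)) (x : Fin n → F), x ∈ Code T →
      ∃ c : Fin n → F, x = ∑ m ∈ T, c m • e m := by
    intro T x hx
    have hx' : x ∈ Submodule.span F (↑(T.image e) : Set (Fin n → F)) := by
      rw [Finset.coe_image]; exact hx
    obtain ⟨f, -, hf⟩ := Submodule.mem_span_finset.1 hx'
    refine ⟨fun m => f (e m), ?_⟩
    rw [← hf, Finset.sum_image (fun x _ y _ h => hli.injective h)]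
  -- inner products of eigenvectors
  have hBe : ∀ j m : Fin n, ∑ i, e j i * e m i = if m = j.rev then (n : F) else 0 := by
    intro j m
    have hmul : ∀ i : Fin n, e j i * e m i = (r j * r m) ^ (i : ℕ) := by
      intro i; simp [he, mul_pow]
    rw [Finset.sum_congr rfl fun i _ => hmul i]
    by_cases hm : m = j.rev
    · subst hm
      have h1 : r j * r j.rev = 1 := by
        rw [hr]
        rw [← pow_add]
        have hlt := j.isLt
        have hexp : (2 * (j : ℕ) + 1) + (2 * ((j.rev : Fin n) : ℕ) + 1) = 2 * n := by
          rw [Fin.val_rev]; omega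
        rw [hexp]
        exact (hgpow _).2 dvd_rfl
      rw [if_pos rfl]
      simp [h1]
    · rw [if_neg hm]
      apply fin_geom_sum_zero
      · intro h
        have h' : g ^ ((2 * (j : ℕ) + 1) + (2 * (m : ℕ) + 1)) = 1 := by
          rw [pow_add]; exact h
        obtain ⟨t, ht⟩ := (hgpow _).1 h'
        have hjl := j.isLt
        have hml := m.isLt
        match t, ht with
        | 0, ht => omega
        | 1, ht =>
          exact hm (Fin.ext (by rw [Fin.val_rev]; omega))
        | (t+2), ht =>
          have : 2 * n * 2 ≤ 2 * n * (t + 2) := Nat.mul_le_mul_left _ (by omega)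
          omega
      · rw [mul_pow, hrn, hrn]; ring
  have hBsum : ∀ (s : Finset (Fin n)) (c w : Fin n → F),
      ∑ i, (∑ m ∈ s, c m • e m) i * w i = ∑ m ∈ s, c m * ∑ i, e m i * w i := by
    intro s c w
    simp only [Finset.sum_apply, Pi.smul_apply, smul_eq_mul, Finset.sum_mul, Finset.mul_sum]
    rw [Finset.sum_comm]
    exact Finset.sum_congr rfl fun m _ => Finset.sum_congr rfl fun i _ => by ring
  -- correspondence
  have hCodeNega : ∀ T, IsNegacyclic (Code T) := by
    intro T c hcmem
    obtain ⟨c', hc'⟩ := hrep T c hcmem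
    have hns : negashift c = ∑ m ∈ T, (c' m * lam m) • e m := by
      show negashiftLM F n c = _
      rw [hc', map_sum]
      exact Finset.sum_congr rfl fun m _ => by rw [map_smul, heig m, smul_smul]
    rw [hns]
    exact Submodule.sum_mem _ fun m hm => Submodule.smul_mem _ _ ((hmemCode T m).2 hm)
  have hNegaEq : ∀ C : Submodule F (Fin n → F), IsNegacyclic C →
      C = Code (Finset.univ.filter fun j => e j ∈ C) := by
    intro C hCn
    apply le_antisymm
    · intro x hx
      have hsum : ∑ j, b.repr x j • e j = x := by
        have hx2 := b.sum_repr x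
        rwa [hb] at hx2
      have hcomp : ∀ j, (b.repr x j) • e j ∈ C := fun j =>
        eig_comp_mem (negashiftLM F n) lam hlaminj e heig C hCn j Finset.univ _
          (by rw [hsum]; exact hx) (Finset.mem_univ j)
      rw [← hsum]
      apply Submodule.sum_mem
      intro j _
      by_cases hz : b.repr x j = 0
      · simp [hz]
      · have hej : e j ∈ C := by
          have h3 := C.smul_mem (b.repr x j)⁻¹ (hcomp j)
          rwa [smul_smul, inv_mul_cancel₀ hz, one_smul] at h3
        exact Submodule.smul_mem _ _ ((hmemCode _ j).2 (by simp [hej]))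
    · show Submodule.span F _ ≤ C
      apply Submodule.span_le.2
      rintro y ⟨j, hj, rfl⟩
      exact (Finset.mem_filter.1 (Finset.mem_coe.1 hj)).2
  have hLCD_iff : ∀ T : Finset (Fin n), IsLCD (Code T) ↔ ∀ j ∈ T, j.rev ∈ T := by
    intro T
    constructor
    · intro hlcd j hj
      by_contra hrj
      have h1 : ∀ y ∈ Code T, ∑ i, e j i * y i = 0 := by
        intro y hy
        obtain ⟨c, rfl⟩ := hrep T y hy
        have hsw : ∑ i, e j i * (∑ m ∈ T, c m • e m) i
            = ∑ i, (∑ m ∈ T, c m • e m) i * e j i :=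
          Finset.sum_congr rfl fun i _ => by ring
        rw [hsw, hBsum]
        apply Finset.sum_eq_zero
        intro m hm
        rw [hBe m j, if_neg, mul_zero]
        intro hmj
        have hjr : j.rev = m := by rw [hmj, Fin.rev_rev]
        exact hrj (hjr ▸ hm)
      exact absurd (hlcd (e j) ((hmemCode T j).2 hj) h1) (hez j)
    · intro hinv x hx horth
      obtain ⟨c, rfl⟩ := hrep T x hx
      apply Finset.sum_eq_zero
      intro m hm
      have hy : e (m.rev) ∈ Code T := (hmemCode _ _).2 (hinv m hm)
      have h0 := horth (e m.rev) hy
      rw [hBsum] at h0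
      have hterm : ∀ k ∈ T, c k * (∑ i, e k i * e (m.rev) i)
          = if k = m then c k * (n : F) else 0 := by
        intro k hk
        rw [hBe k (m.rev)]
        by_cases hkm : k = m
        · subst hkm; rw [if_pos rfl, if_pos rfl]
        · rw [if_neg, if_neg hkm, mul_zero]
          intro h; exact hkm (Fin.rev_inj.1 h.symm)
      rw [Finset.sum_congr rfl hterm, Finset.sum_ite_eq' T m (fun k => c k * (n : F)),
        if_pos hm] at h0
      have hc0 : c m = 0 := by
        rcases mul_eq_zero.1 h0 with h | h
        · exact h
        · exact absurd h hnF
      rw [hc0, zero_smul]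
  have hbot : Code ∅ = ⊥ := by simp [hCode]
  have htop : Code Finset.univ = ⊤ := by
    show Submodule.span F (e '' ↑(Finset.univ : Finset (Fin n))) = ⊤
    rw [Finset.coe_univ, Set.image_univ, ← hb]
    exact b.span_eq
  -- counting invariant subsets
  set h2 : ℕ := (n + 1) / 2 with hh2
  have hh2n : h2 ≤ n ∧ n ≤ 2 * h2 ∧ 2 * h2 ≤ n + 1 := by omega
  set D : Finset (Fin n) := Finset.univ.filter (fun j : Fin n => (j : ℕ) < h2) with hD
  have hDcard : D.card = h2 := by
    have hmap : (Finset.univ : Finset (Fin h2)).map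
        ⟨Fin.castLE hh2n.1, Fin.castLE_injective _⟩ = D := by
      ext j
      simp only [Finset.mem_map, Finset.mem_univ, true_and, Function.Embedding.coeFn_mk,
        hD, Finset.mem_filter]
      constructor
      · rintro ⟨i, rfl⟩; exact i.isLt
      · intro hj; exact ⟨⟨(j : ℕ), hj⟩, Fin.ext rfl⟩
    rw [← hmap, Finset.card_map, Finset.card_univ, Fintype.card_fin]
  set A : Finset (Finset (Fin n)) :=
    Finset.univ.filter (fun T : Finset (Fin n) => ∀ j ∈ T, j.rev ∈ T) with hA
  have hrevD : ∀ j : Fin n, (j : ℕ) ≥ h2 → ((j.rev : Fin n) : ℕ) < h2 := by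
    intro j hj
    rw [Fin.val_rev]
    have := j.isLt
    omega
  have hAcard : A.card = 2 ^ h2 := by
    rw [← hDcard, ← Finset.card_powerset]
    apply Finset.card_nbij' (i := fun T => T.filter (fun j : Fin n => (j : ℕ) < h2))
      (j := fun T' => T' ∪ T'.image Fin.rev)
    · intro T _
      rw [Finset.mem_coe, Finset.mem_powerset]
      intro j hj
      rw [hD, Finset.mem_filter]
      exact ⟨Finset.mem_univ j, (Finset.mem_filter.1 hj).2⟩
    · intro T' hT'
      rw [Finset.mem_coe, Finset.mem_filter]
      refine ⟨Finset.mem_univ _, ?_⟩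
      intro j hj
      rcases Finset.mem_union.1 hj with h | h
      · exact Finset.mem_union_right _ (Finset.mem_image_of_mem _ h)
      · obtain ⟨k, hk, rfl⟩ := Finset.mem_image.1 h
        rw [Fin.rev_rev]
        exact Finset.mem_union_left _ hk
    · intro T hT
      have hTinv : ∀ j ∈ T, j.rev ∈ T := (Finset.mem_filter.1 hT).2
      ext j
      constructor
      · intro hj
        rcases Finset.mem_union.1 hj with h | h
        · exact (Finset.mem_filter.1 h).1
        · obtain ⟨k, hk, rfl⟩ := Finset.mem_image.1 h
          exact hTinv k (Finset.mem_filter.1 hk).1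
      · intro hj
        by_cases hp : (j : ℕ) < h2
        · exact Finset.mem_union_left _ (Finset.mem_filter.2 ⟨hj, hp⟩)
        · apply Finset.mem_union_right
          apply Finset.mem_image.2
          refine ⟨j.rev, Finset.mem_filter.2 ⟨hTinv j hj, hrevD j (by omega)⟩, Fin.rev_rev j⟩
    · intro T' hT'
      have hsub : T' ⊆ D := Finset.mem_powerset.1 hT'
      ext j
      constructor
      · intro hj
        have hj2 := Finset.mem_filter.1 hj
        rcases Finset.mem_union.1 hj2.1 with h | h
        · exact h
        · obtain ⟨k, hk, rfl⟩ := Finset.mem_image.1 h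
          have hkD : (k : ℕ) < h2 := by
            have := Finset.mem_filter.1 (hsub hk)
            exact (by exact this.2 : (k : ℕ) < h2)
          have hrevval : ((k.rev : Fin n) : ℕ) = n - (k + 1) := Fin.val_rev k
          have : k.rev = k := Fin.ext (by rw [hrevval]; omega)
          rwa [this]
      · intro hj
        have hjD : (j : ℕ) < h2 := by
          have := Finset.mem_filter.1 (hsub hj)
          exact this.2
        exact Finset.mem_filter.2 ⟨Finset.mem_union_left _ hj, hjD⟩
  -- remove trivial codes
  set B2 : Finset (Finset (Fin n)) :=
    Finset.univ.filter (fun T : Finset (Fin n) =>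
      (∀ j ∈ T, j.rev ∈ T) ∧ T ≠ ∅ ∧ T ≠ Finset.univ) with hB2
  have hB2A : B2 = A.filter (fun T => T ≠ ∅ ∧ T ≠ Finset.univ) := by
    ext T
    simp only [hB2, hA, Finset.mem_filter, Finset.mem_univ, true_and]
    try tauto
  have hAneg : A.filter (fun T => ¬(T ≠ ∅ ∧ T ≠ Finset.univ))
      = {∅, Finset.univ} := by
    ext T
    simp only [Finset.mem_filter, hA, Finset.mem_univ, true_and, not_and_or, not_not,
      not_ne_iff, Finset.mem_insert, Finset.mem_singleton]
    constructor
    · tauto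
    · rintro (rfl | rfl)
      · exact ⟨fun j hj => absurd hj (Finset.notMem_empty j), Or.inl rfl⟩
      · exact ⟨fun j _ => Finset.mem_univ _, Or.inr rfl⟩
  have huniv_ne : (Finset.univ : Finset (Fin n)) ≠ ∅ := by
    intro h
    have : (⟨0, by omega⟩ : Fin n) ∈ (Finset.univ : Finset (Fin n)) := Finset.mem_univ _
    rw [h] at this
    exact Finset.notMem_empty _ this
  have hpair : ({∅, Finset.univ} : Finset (Finset (Fin n))).card = 2 :=
    Finset.card_pair (fun h => huniv_ne h.symm)
  have hB2card : B2.card = 2 ^ h2 - 2 := by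
    have hsplit := Finset.card_filter_add_card_filter_not
      (s := A) (p := fun T => T ≠ ∅ ∧ T ≠ Finset.univ)
    rw [hAneg, hpair, hAcard] at hsplit
    rw [hB2A]
    omega
  -- the equivalence
  have e1 : {C : Submodule F (Fin n → F) // IsNegacyclic C ∧ IsLCD C ∧ C ≠ ⊥ ∧ C ≠ ⊤} ≃
      {T : Finset (Fin n) // (∀ j ∈ T, j.rev ∈ T) ∧ T ≠ ∅ ∧ T ≠ Finset.univ} :=
    { toFun := fun C => ⟨Finset.univ.filter (fun j => e j ∈ C.1), by
        obtain ⟨C, hC1, hC2, hC3, hC4⟩ := C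
        have hEq := hNegaEq C hC1
        refine ⟨(hLCD_iff _).1 (hEq ▸ hC2), ?_, ?_⟩
        · intro h0; exact hC3 (by rw [hEq, h0, hbot])
        · intro h0; exact hC4 (by rw [hEq, h0, htop])⟩
      invFun := fun T => ⟨Code T.1, by
        obtain ⟨T, hT1, hT2, hT3⟩ := T
        exact ⟨hCodeNega T, (hLCD_iff T).2 hT1,
          fun h => hT2 (hCodeInj (h.trans hbot.symm)),
          fun h => hT3 (hCodeInj (h.trans htop.symm))⟩⟩
      left_inv := fun C => Subtype.ext (hNegaEq C.1 C.2.1).symm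
      right_inv := fun T => Subtype.ext (by
        ext j
        simp only [Finset.mem_filter, Finset.mem_univ, true_and]
        exact hmemCode T.1 j) }
  have hNat : Nat.card {C : Submodule F (Fin n → F) //
      IsNegacyclic C ∧ IsLCD C ∧ C ≠ ⊥ ∧ C ≠ ⊤} = 2 ^ h2 - 2 := by
    rw [Nat.card_congr e1]
    rw [← hB2card]
    have e2 : {T : Finset (Fin n) // (∀ j ∈ T, j.rev ∈ T) ∧ T ≠ ∅ ∧ T ≠ Finset.univ} ≃
        {T : Finset (Fin n) // T ∈ B2} :=
      Equiv.subtypeEquivRight (fun T => by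
        simp only [hB2, Finset.mem_filter, Finset.mem_univ, true_and])
    rw [Nat.card_congr e2, Nat.card_eq_finsetCard]
  constructor
  · intro hev
    obtain ⟨t, ht⟩ := hev
    have hk : h2 = (n - 2) / 2 + 1 := by omega
    rw [hNat, hk, pow_succ]
    have := Nat.two_pow_pos ((n - 2) / 2)
    omega
  · intro hodd
    obtain ⟨t, ht⟩ := hodd
    have hk : h2 = (n - 1) / 2 + 1 := by omega
    rw [hNat, hk, pow_succ]
    have := Nat.two_pow_pos ((n - 1) / 2)
    omega
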